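/- Let t be a nonnegative integer and n an integer with n ≥ max(8(t+1)^3, 40(t+2)). Regarding P_{n,t} as a polynomial over ℂ, the multiset of its complex roots (counted with multiplicity) that lie on the unit circle {z : |z| = 1} has cardinality at most 2n−1. -/

import Mathlib

open Polynomial
open scoped Classical

/-- The polynomial `P_{n,t}(X) = X^{2n} - X^{2n-1} + ∑_{i=0}^{2t} (-1)^i X^{n+2t-2i} - X + 1`. -/
noncomputable def Ppoly (n t : ℕ) : Polynomial ℤ :=
  X^(2*n) - X^(2*n-1) + ∑ i ∈ Finset.range (2*t+1), (-1)^i • X^(n+2*t-2*i) - X + 1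

section AuxStmt16
open Finset

open Polynomial

namespace Stmt16Aux

noncomputable def W (s : Multiset ℂ) : Polynomial ℂ :=
  (s.map (fun a => 1 - C a * X)).prod

noncomputable def dd (k : ℕ) (s : Multiset ℂ) : ℂ := (W s).coeff k

noncomputable def pp (k : ℕ) (s : Multiset ℂ) : ℂ := (s.map (· ^ k)).sum

@[simp] lemma W_zero : W 0 = 1 := by simp [W]

@[simp] lemma W_cons (a : ℂ) (s : Multiset ℂ) :
    W (a ::ₘ s) = (1 - C a * X) * W s := by
  simp [W, Multiset.map_cons, Multiset.prod_cons]

@[simp] lemma dd_zero (s : Multiset ℂ) : dd 0 s = 1 := by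
  induction s using Multiset.induction_on with
  | empty => simp [dd]
  | cons a s ih =>
      rw [dd, W_cons, Polynomial.mul_coeff_zero]
      have h1 : (1 - C a * X).coeff 0 = 1 := by
        simp [Polynomial.coeff_sub]
      rw [h1, one_mul]; exact ih

@[simp] lemma dd_succ_zero (k : ℕ) : dd (k+1) 0 = 0 := by
  simp [dd, Polynomial.coeff_one]

lemma dd_cons (k : ℕ) (a : ℂ) (s : Multiset ℂ) :
    dd (k+1) (a ::ₘ s) = dd (k+1) s - a * dd k s := by
  have h : (1 - C a * X) * W s = W s - C a * (X * W s) := by ring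
  rw [dd, W_cons, h, Polynomial.coeff_sub, Polynomial.coeff_C_mul,
    Polynomial.coeff_X_mul]
  rfl


lemma dd1_cons (a : ℂ) (s : Multiset ℂ) : dd 1 (a ::ₘ s) = dd 1 s - a := by
  have h := dd_cons 0 a s
  rw [dd_zero] at h
  simpa using h

lemma dd2_cons (a : ℂ) (s : Multiset ℂ) : dd 2 (a ::ₘ s) = dd 2 s - a * dd 1 s :=
  dd_cons 1 a s

lemma dd3_cons (a : ℂ) (s : Multiset ℂ) : dd 3 (a ::ₘ s) = dd 3 s - a * dd 2 s :=
  dd_cons 2 a s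

lemma dd4_cons (a : ℂ) (s : Multiset ℂ) : dd 4 (a ::ₘ s) = dd 4 s - a * dd 3 s :=
  dd_cons 3 a s

@[simp] lemma pp_zero (k : ℕ) : pp k 0 = 0 := by simp [pp]

lemma pp_cons (k : ℕ) (a : ℂ) (s : Multiset ℂ) :
    pp k (a ::ₘ s) = a ^ k + pp k s := by
  simp [pp, Multiset.map_cons, Multiset.sum_cons]

lemma L1 (s : Multiset ℂ) : pp 1 s + dd 1 s = 0 := by
  induction s using Multiset.induction_on with
  | empty => simp
  | cons a s ih =>
      rw [pp_cons, dd1_cons]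
      linear_combination ih

lemma L2 (s : Multiset ℂ) : pp 2 s + dd 1 s * pp 1 s + 2 * dd 2 s = 0 := by
  induction s using Multiset.induction_on with
  | empty => simp
  | cons a s ih =>
      rw [pp_cons, pp_cons, dd1_cons, dd2_cons]
      linear_combination ih - a * L1 s

lemma L3 (s : Multiset ℂ) :
    pp 3 s + dd 1 s * pp 2 s + dd 2 s * pp 1 s + 3 * dd 3 s = 0 := by
  induction s using Multiset.induction_on with
  | empty => simp
  | cons a s ih =>
      rw [pp_cons, pp_cons, pp_cons, dd1_cons, dd2_cons, dd3_cons]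
      linear_combination ih - a * L2 s

lemma L4 (s : Multiset ℂ) :
    pp 4 s + dd 1 s * pp 3 s + dd 2 s * pp 2 s + dd 3 s * pp 1 s + 4 * dd 4 s = 0 := by
  induction s using Multiset.induction_on with
  | empty => simp
  | cons a s ih =>
      rw [pp_cons, pp_cons, pp_cons, pp_cons, dd1_cons, dd2_cons, dd3_cons, dd4_cons]
      linear_combination ih - a * L3 s

lemma sum4 (s : Multiset ℂ) :
    (s.map (fun b => (b - 2⁻¹) ^ 4)).sum
      = pp 4 s - 2 * pp 3 s + (3/2) * pp 2 s - (1/2) * pp 1 s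
        + (Multiset.card s : ℂ) * (1/16) := by
  induction s using Multiset.induction_on with
  | empty => simp
  | cons a s ih =>
      rw [Multiset.map_cons, Multiset.sum_cons, ih, pp_cons, pp_cons, pp_cons,
        pp_cons, Multiset.card_cons]
      push_cast
      ring



lemma alt_one (t : ℕ) : ∑ i ∈ range (2*t+1), (-1:ℂ)^i = 1 := by
  induction t with
  | zero => simp
  | succ t ih =>
      have h : 2*(t+1)+1 = (2*t+1)+1+1 := by ring
      rw [h, Finset.sum_range_succ, Finset.sum_range_succ, ih, pow_succ]
      ring
lemma onesub_pow_coeff (e : ℕ) :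
    ((1 - X : Polynomial ℂ) ^ e).coeff 0 = 1 ∧
    ((1 - X : Polynomial ℂ) ^ e).coeff 1 = -(e : ℂ) ∧
    ((1 - X : Polynomial ℂ) ^ e).coeff 2 = (e : ℂ) * ((e : ℂ) - 1) / 2 ∧
    ((1 - X : Polynomial ℂ) ^ e).coeff 3
      = -((e : ℂ) * ((e : ℂ) - 1) * ((e : ℂ) - 2) / 6) ∧
    ((1 - X : Polynomial ℂ) ^ e).coeff 4
      = (e : ℂ) * ((e : ℂ) - 1) * ((e : ℂ) - 2) * ((e : ℂ) - 3) / 24 := by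
  induction e with
  | zero =>
      refine ⟨by simp, by simp [Polynomial.coeff_one], by simp [Polynomial.coeff_one], by simp [Polynomial.coeff_one], by simp [Polynomial.coeff_one]⟩
  | succ e ih =>
      obtain ⟨h0, h1, h2, h3, h4⟩ := ih
      have hmul : (1 - X : Polynomial ℂ) ^ (e+1)
          = (1 - X) ^ e - ((1 - X) ^ e) * X := by
        rw [pow_succ]; ring
      have c0 : (((1 - X : Polynomial ℂ) ^ e) * X).coeff 0 = 0 := by
        rw [Polynomial.mul_coeff_zero]; simp
      have cS : ∀ k : ℕ, (((1 - X : Polynomial ℂ) ^ e) * X).coeff (k+1)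
          = ((1 - X : Polynomial ℂ) ^ e).coeff k := fun k => Polynomial.coeff_mul_X _ _
      refine ⟨?_, ?_, ?_, ?_, ?_⟩
      · rw [hmul, Polynomial.coeff_sub, c0, h0]; ring
      · rw [hmul, Polynomial.coeff_sub, show (1:ℕ) = 0 + 1 from rfl, cS 0, h0, h1]
        push_cast; ring
      · rw [hmul, Polynomial.coeff_sub, show (2:ℕ) = 1 + 1 from rfl, cS 1, h1, h2]
        push_cast; ring
      · rw [hmul, Polynomial.coeff_sub, show (3:ℕ) = 2 + 1 from rfl, cS 2, h2, h3]
        push_cast; ring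
      · rw [hmul, Polynomial.coeff_sub, show (4:ℕ) = 3 + 1 from rfl, cS 3, h3, h4]
        push_cast; ring

/-- generic alternating-sum evaluation -/
lemma altsum_gen (g : ℂ → ℂ) (G : ℂ → ℕ → ℂ)
    (hbase : ∀ c, G c 0 = g c)
    (hstep : ∀ (c : ℂ) (t : ℕ), G c (t+1) = g c - G (c-2) t + g (c - (4*(t:ℂ)+4))) :
    ∀ (t : ℕ) (c : ℂ),
      (∑ i ∈ range (2*t+1), (-1:ℂ)^i * g (c - 2*(i:ℂ))) = G c t := by
  intro t
  induction t with
  | zero =>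
      intro c
      rw [hbase]
      norm_num
  | succ t ih =>
      intro c
      have hidx : 2*(t+1)+1 = (2*t+1+1)+1 := by ring
      rw [hidx, Finset.sum_range_succ', Finset.sum_range_succ]
      have hcongr : ∀ i ∈ range (2*t+1),
          (-1:ℂ)^(i+1) * g (c - 2*((i:ℂ)+1))
            = (-1) * ((-1:ℂ)^i * g ((c-2) - 2*(i:ℂ))) := by
        intro i _
        have harg : c - 2*((i:ℂ)+1) = (c-2) - 2*(i:ℂ) := by ring
        rw [harg, pow_succ]
        ring
      have hsum1 : ∑ i ∈ range (2*t+1), (-1:ℂ)^(i+1) * g (c - 2*((i:ℂ)+1))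
          = (-1) * ∑ i ∈ range (2*t+1), (-1:ℂ)^i * g ((c-2) - 2*(i:ℂ)) := by
        rw [Finset.mul_sum]
        exact Finset.sum_congr rfl hcongr
      -- massage cast shapes
      have hre : ∑ i ∈ range (2*t+1), (-1:ℂ)^(i+1) * g (c - 2*((i+1 : ℕ):ℂ))
          = ∑ i ∈ range (2*t+1), (-1:ℂ)^(i+1) * g (c - 2*((i:ℂ)+1)) := by
        apply Finset.sum_congr rfl
        intro i _
        norm_num
      rw [hre] at *
      rw [hsum1, ih (c-2), hstep c t]
      have h1 : ((-1:ℂ))^(2*t+1+1) = 1 := by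
        have : Even (2*t+1+1) := ⟨t+1, by ring⟩
        exact this.neg_one_pow
      rw [h1]
      have h2 : c - 2*(((2*t+1+1 : ℕ)):ℂ) = c - (4*(t:ℂ)+4) := by
        push_cast; ring
      rw [h2]
      have h3 : c - 2*((0:ℕ):ℂ) = c := by norm_num
      rw [h3]
      ring


lemma Sg1 (t : ℕ) (c : ℂ) :
    (∑ i ∈ range (2*t+1), (-1:ℂ)^i * (-(c - 2*(i:ℂ)))) = -c + 2*(t:ℂ) :=
  altsum_gen (fun m => -m) (fun c t => -c + 2*(t:ℂ))
    (fun c => by norm_num) (fun c t => by push_cast; ring) t c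

lemma Sg2 (t : ℕ) (c : ℂ) :
    (∑ i ∈ range (2*t+1), (-1:ℂ)^i * ((c - 2*(i:ℂ)) * ((c - 2*(i:ℂ)) - 1) / 2))
      = c^2/2 - c/2 - 2*c*(t:ℂ) + 3*(t:ℂ) + 4*(t:ℂ)^2 :=
  altsum_gen (fun m => m * (m - 1) / 2)
    (fun c t => c^2/2 - c/2 - 2*c*(t:ℂ) + 3*(t:ℂ) + 4*(t:ℂ)^2)
    (fun c => by norm_num; ring) (fun c t => by push_cast; ring) t c

lemma Sg3 (t : ℕ) (c : ℂ) :
    (∑ i ∈ range (2*t+1),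
        (-1:ℂ)^i * (-((c - 2*(i:ℂ)) * ((c - 2*(i:ℂ)) - 1) * ((c - 2*(i:ℂ)) - 2) / 6)))
      = -c^3/6 + c^2/2 + c^2*(t:ℂ) - c/3 - 4*c*(t:ℂ) - 4*c*(t:ℂ)^2
          + (8/3)*(t:ℂ) + 8*(t:ℂ)^2 + (16/3)*(t:ℂ)^3 :=
  altsum_gen (fun m => -(m * (m - 1) * (m - 2) / 6))
    (fun c t => -c^3/6 + c^2/2 + c^2*(t:ℂ) - c/3 - 4*c*(t:ℂ) - 4*c*(t:ℂ)^2
          + (8/3)*(t:ℂ) + 8*(t:ℂ)^2 + (16/3)*(t:ℂ)^3)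
    (fun c => by norm_num; ring) (fun c t => by push_cast; ring) t c

lemma Sg4 (t : ℕ) (c : ℂ) :
    (∑ i ∈ range (2*t+1),
        (-1:ℂ)^i * ((c - 2*(i:ℂ)) * ((c - 2*(i:ℂ)) - 1) * ((c - 2*(i:ℂ)) - 2)
          * ((c - 2*(i:ℂ)) - 3) / 24))
      = c^4/24 - c^3/4 - c^3*(t:ℂ)/3 + (11/24)*c^2 + (5/2)*c^2*(t:ℂ)
          + 2*c^2*(t:ℂ)^2 - c/4 - (29/6)*c*(t:ℂ) - 10*c*(t:ℂ)^2
          - (16/3)*c*(t:ℂ)^3 + (5/3)*(t:ℂ) + (29/3)*(t:ℂ)^2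
          + (40/3)*(t:ℂ)^3 + (16/3)*(t:ℂ)^4 :=
  altsum_gen (fun m => m * (m - 1) * (m - 2) * (m - 3) / 24)
    (fun c t => c^4/24 - c^3/4 - c^3*(t:ℂ)/3 + (11/24)*c^2 + (5/2)*c^2*(t:ℂ)
          + 2*c^2*(t:ℂ)^2 - c/4 - (29/6)*c*(t:ℂ) - 10*c*(t:ℂ)^2
          - (16/3)*c*(t:ℂ)^3 + (5/3)*(t:ℂ) + (29/3)*(t:ℂ)^2
          + (40/3)*(t:ℂ)^3 + (16/3)*(t:ℂ)^4)
    (fun c => by norm_num; ring) (fun c t => by push_cast; ring) t c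


end Stmt16Aux

end AuxStmt16

set_option maxHeartbeats 1600000 in
theorem stmt_16 (t : ℕ) (n : ℕ) (hn : max (8*(t+1)^3) (40*(t+2)) ≤ n) :
    Multiset.card (((Ppoly n t).map (Int.castRingHom ℂ)).roots.filter
      (fun z => ‖z‖ = 1)) ≤ 2*n - 1 := by
  classical
  have hn1 : 8*(t+1)^3 ≤ n := le_trans (le_max_left _ _) hn
  have hn2 : 40*(t+2) ≤ n := le_trans (le_max_right _ _) hn
  have hn80 : 80 ≤ n := by omega
  set Q : Polynomial ℂ := (Ppoly n t).map (Int.castRingHom ℂ) with hQdef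
  have hPform : Ppoly n t = X^(2*n) - X^(2*n-1)
      + ∑ i ∈ Finset.range (2*t+1), C ((-1:ℤ)^i) * X^(n+2*t-2*i) - X + 1 := by
    unfold Ppoly
    simp only [Polynomial.smul_eq_C_mul]
  have hQform : Q = X^(2*n) - X^(2*n-1)
      + ∑ i ∈ Finset.range (2*t+1), C ((-1:ℂ)^i) * X^(n+2*t-2*i) - X + 1 := by
    have hmapsum : (∑ i ∈ Finset.range (2*t+1),
          C ((-1:ℤ)^i) * X^(n+2*t-2*i)).map (Int.castRingHom ℂ)
        = ∑ i ∈ Finset.range (2*t+1), C ((-1:ℂ)^i) * X^(n+2*t-2*i) := by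
      rw [← Polynomial.coe_mapRingHom, map_sum]
      apply Finset.sum_congr rfl
      intro i _
      rw [Polynomial.coe_mapRingHom, Polynomial.map_mul, Polynomial.map_pow,
        Polynomial.map_X, Polynomial.map_C]
      simp only [map_pow, map_neg, map_one]
    rw [hQdef, hPform]
    simp only [Polynomial.map_add, Polynomial.map_sub, Polynomial.map_pow,
      Polynomial.map_X, Polynomial.map_one, hmapsum]
  have hsumdeg : (∑ i ∈ Finset.range (2*t+1), C ((-1:ℂ)^i) * X^(n+2*t-2*i)).degree
      ≤ ((2*n-1 : ℕ) : WithBot ℕ) := by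
    refine (Polynomial.degree_sum_le _ _).trans ?_
    refine Finset.sup_le fun i _ => ?_
    refine (Polynomial.degree_C_mul_X_pow_le _ _).trans ?_
    exact Nat.cast_le.mpr (by omega : n+2*t-2*i ≤ 2*n-1)
  set Grest : Polynomial ℂ := -(X^(2*n-1))
      + (∑ i ∈ Finset.range (2*t+1), C ((-1:ℂ)^i) * X^(n+2*t-2*i)) - X + 1 with hG
  have hQG : Q = X^(2*n) + Grest := by rw [hQform, hG]; ring
  have hdegG : Grest.degree < ((2*n : ℕ) : WithBot ℕ) := by
    rw [hG]
    have hb : ((2*n-1:ℕ) : WithBot ℕ) < ((2*n:ℕ) : WithBot ℕ) :=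
      Nat.cast_lt.mpr (by omega)
    refine lt_of_le_of_lt ?_ hb
    refine (Polynomial.degree_add_le _ _).trans (max_le ?_ ?_)
    · refine (Polynomial.degree_sub_le _ _).trans (max_le ?_ ?_)
      · refine (Polynomial.degree_add_le _ _).trans (max_le ?_ ?_)
        · rw [Polynomial.degree_neg, Polynomial.degree_X_pow]
        · exact hsumdeg
      · refine Polynomial.degree_X_le.trans ?_
        exact_mod_cast Nat.cast_le.mpr (by omega : 1 ≤ 2*n-1)
    · refine Polynomial.degree_one_le.trans ?_
      exact_mod_cast Nat.cast_le.mpr (by omega : 0 ≤ 2*n-1)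
  have hmon : Q.Monic := by
    rw [hQG]
    exact Polynomial.monic_X_pow_add hdegG
  have hQdeg : Q.natDegree = 2*n := by
    have hdeg : Q.degree = ((2*n : ℕ) : WithBot ℕ) := by
      rw [hQG, Polynomial.degree_add_eq_left_of_degree_lt
        (by rwa [Polynomial.degree_X_pow]), Polynomial.degree_X_pow]
    exact Polynomial.natDegree_eq_of_degree_eq_some hdeg
  have hsplits : Q.Splits := IsAlgClosed.splits Q
  have hcard : Multiset.card Q.roots = 2*n := by
    rw [(Polynomial.splits_iff_card_roots).mp hsplits, hQdeg]
  have hprod : Q = (Q.roots.map fun a => X - C a).prod :=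
    hsplits.eq_prod_roots_of_monic hmon
  have heval1 : Q.eval 1 = 1 := by
    rw [hQform]
    simp only [Polynomial.eval_add, Polynomial.eval_sub, Polynomial.eval_pow,
      Polynomial.eval_X, Polynomial.eval_one, Polynomial.eval_finset_sum,
      Polynomial.eval_mul, Polynomial.eval_C, one_pow, mul_one]
    rw [Stmt16Aux.alt_one t]
    norm_num
  -- contradiction setup
  by_contra hcon
  push_neg at hcon
  have hge : 2*n ≤ Multiset.card (Q.roots.filter (fun z => ‖z‖ = 1)) := by
    omega
  have hfe : Q.roots.filter (fun z => ‖z‖ = 1) = Q.roots :=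
    Multiset.eq_of_le_of_card_le (Multiset.filter_le _ _) (by rw [hcard]; exact hge)
  have hall : ∀ z ∈ Q.roots, ‖z‖ = 1 := by
    intro z hz
    rw [← hfe] at hz
    exact (Multiset.mem_filter.mp hz).2
  have hroot_ne_one : ∀ z ∈ Q.roots, z ≠ 1 := by
    intro z hz h1
    have hr := Polynomial.isRoot_of_mem_roots hz
    rw [Polynomial.IsRoot, h1, heval1] at hr
    exact one_ne_zero hr
  have hsub_ne : ∀ z ∈ Q.roots, (1:ℂ) - z ≠ 0 :=
    fun z hz => sub_ne_zero.mpr (Ne.symm (hroot_ne_one z hz))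
  -- the composed polynomial H and the multiset ms
  set H : Polynomial ℂ := Q.comp (1 - X) with hHdef
  have hHprod : H = (Q.roots.map fun a => C (1-a) - X).prod := by
    rw [hHdef]
    conv_lhs => rw [hprod]
    rw [Polynomial.multiset_prod_comp, Multiset.map_map]
    congr 1
    apply Multiset.map_congr rfl
    intro a _
    simp only [Function.comp_apply, Polynomial.sub_comp, Polynomial.X_comp,
      Polynomial.C_comp]
    rw [Polynomial.C_sub, Polynomial.C_1]
    ring
  set ms : Multiset ℂ := Q.roots.map (fun a => (1-a)⁻¹) with hmsdef
  have hcardms : Multiset.card ms = 2*n := by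
    rw [hmsdef, Multiset.card_map, hcard]
  have hprod1 : (Q.roots.map (fun a => 1-a)).prod = 1 := by
    have h1 : (Q.roots.map (fun a => 1-a)).prod = Q.eval 1 := by
      conv_rhs => rw [hprod]
      rw [Polynomial.eval_multiset_prod, Multiset.map_map]
      congr 1
      apply Multiset.map_congr rfl
      intro a _
      simp
    rw [h1, heval1]
  have hWH : Stmt16Aux.W ms = H := by
    have key : ∀ a ∈ Q.roots,
        (fun b => C (1-b) - X) a
          = (fun b => (C (1-b) : Polynomial ℂ)) a * (fun b => 1 - C ((1-b)⁻¹) * X) a := by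
      intro a ha
      simp only
      rw [mul_sub, mul_one, ← mul_assoc, ← Polynomial.C_mul,
        mul_inv_cancel₀ (hsub_ne a ha), Polynomial.C_1, one_mul]
    rw [hHprod, Multiset.map_congr rfl key, Multiset.prod_map_mul]
    have h4 : (Q.roots.map fun a => (C (1-a) : Polynomial ℂ)).prod
        = C ((Q.roots.map fun a => 1-a).prod) := by
      have hmm : (Q.roots.map fun a => (C (1-a) : Polynomial ℂ))
          = ((Q.roots.map (fun a => 1-a)).map Polynomial.C) := by
        rw [Multiset.map_map]
        rfl
      rw [hmm]
      exact (map_multiset_prod (Polynomial.C : ℂ →+* Polynomial ℂ) _).symm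
    rw [h4, hprod1, Polynomial.C_1, one_mul, hmsdef, Stmt16Aux.W, Multiset.map_map]
    rfl
  -- explicit form of H and its coefficients
  have hHform : H = (1-X)^(2*n) - (1-X)^(2*n-1)
      + ∑ i ∈ Finset.range (2*t+1), C ((-1:ℂ)^i) * (1-X)^(n+2*t-2*i) - (1-X) + 1 := by
    rw [hHdef, hQform]
    simp only [Polynomial.add_comp, Polynomial.sub_comp, Polynomial.pow_comp,
      Polynomial.X_comp, Polynomial.one_comp, Polynomial.mul_comp, Polynomial.C_comp,
      Polynomial.sum_comp]
  have hcoeff : ∀ k : ℕ, H.coeff k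
      = ((1-X:Polynomial ℂ)^(2*n)).coeff k - ((1-X:Polynomial ℂ)^(2*n-1)).coeff k
        + ∑ i ∈ Finset.range (2*t+1), (-1:ℂ)^i * ((1-X:Polynomial ℂ)^(n+2*t-2*i)).coeff k
        - (1-X:Polynomial ℂ).coeff k + (1:Polynomial ℂ).coeff k := by
    intro k
    rw [hHform]
    simp only [Polynomial.coeff_add, Polynomial.coeff_sub, Polynomial.finset_sum_coeff,
      Polynomial.coeff_C_mul]
  have hc2n1 : ((2*n-1 : ℕ) : ℂ) = 2*(n:ℂ) - 1 := by
    rw [Nat.cast_sub (by omega : 1 ≤ 2*n)]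
    push_cast
    ring
  have harg : ∀ i ∈ Finset.range (2*t+1),
      ((n+2*t-2*i : ℕ) : ℂ) = ((n:ℂ)+2*(t:ℂ)) - 2*(i:ℂ) := by
    intro i hi
    have hi' : i ≤ 2*t := by
      have := Finset.mem_range.mp hi
      omega
    rw [Nat.cast_sub (by omega : 2*i ≤ n+2*t)]
    push_cast
    ring
  -- dd values
  have hd1 : Stmt16Aux.dd 1 ms = -(n:ℂ) := by
    rw [Stmt16Aux.dd, hWH, hcoeff 1]
    rw [(Stmt16Aux.onesub_pow_coeff (2*n)).2.1, (Stmt16Aux.onesub_pow_coeff (2*n-1)).2.1]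
    rw [Finset.sum_congr rfl (fun i hi => by
      rw [(Stmt16Aux.onesub_pow_coeff (n+2*t-2*i)).2.1, harg i hi])]
    rw [Stmt16Aux.Sg1 t ((n:ℂ)+2*(t:ℂ))]
    rw [hc2n1]
    simp only [Polynomial.coeff_sub, Polynomial.coeff_one, Polynomial.coeff_X_one]
    push_cast
    norm_num
    ring
  have hd2 : Stmt16Aux.dd 2 ms
      = (n:ℂ)^2/2 + (3/2)*(n:ℂ) - 1 + 2*(t:ℂ) + 2*(t:ℂ)^2 := by
    rw [Stmt16Aux.dd, hWH, hcoeff 2]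
    rw [(Stmt16Aux.onesub_pow_coeff (2*n)).2.2.1, (Stmt16Aux.onesub_pow_coeff (2*n-1)).2.2.1]
    rw [Finset.sum_congr rfl (fun i hi => by
      rw [(Stmt16Aux.onesub_pow_coeff (n+2*t-2*i)).2.2.1, harg i hi])]
    rw [Stmt16Aux.Sg2 t ((n:ℂ)+2*(t:ℂ))]
    rw [hc2n1]
    simp only [Polynomial.coeff_sub, Polynomial.coeff_one, Polynomial.coeff_X]
    push_cast
    norm_num
    ring
  have hd3 : Stmt16Aux.dd 3 ms
      = -(n:ℂ)^3/6 - (3/2)*(n:ℂ)^2 + (8/3)*(n:ℂ) - 1 + 2*(t:ℂ) + 2*(t:ℂ)^2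
        - 2*(n:ℂ)*(t:ℂ) - 2*(n:ℂ)*(t:ℂ)^2 := by
    rw [Stmt16Aux.dd, hWH, hcoeff 3]
    rw [(Stmt16Aux.onesub_pow_coeff (2*n)).2.2.2.1,
      (Stmt16Aux.onesub_pow_coeff (2*n-1)).2.2.2.1]
    rw [Finset.sum_congr rfl (fun i hi => by
      rw [(Stmt16Aux.onesub_pow_coeff (n+2*t-2*i)).2.2.2.1, harg i hi])]
    rw [Stmt16Aux.Sg3 t ((n:ℂ)+2*(t:ℂ))]
    rw [hc2n1]
    simp only [Polynomial.coeff_sub, Polynomial.coeff_one, Polynomial.coeff_X]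
    push_cast
    norm_num
    ring
  have hd4 : Stmt16Aux.dd 4 ms
      = (n:ℂ)^4/24 + (13/12)*(n:ℂ)^3 - (85/24)*(n:ℂ)^2 + (41/12)*(n:ℂ) - 1
        + (7/6)*(t:ℂ) + (11/6)*(t:ℂ)^2 + (4/3)*(t:ℂ)^3 + (2/3)*(t:ℂ)^4
        - 3*(n:ℂ)*(t:ℂ) - 3*(n:ℂ)*(t:ℂ)^2 + (n:ℂ)^2*(t:ℂ) + (n:ℂ)^2*(t:ℂ)^2 := by
    rw [Stmt16Aux.dd, hWH, hcoeff 4]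
    rw [(Stmt16Aux.onesub_pow_coeff (2*n)).2.2.2.2,
      (Stmt16Aux.onesub_pow_coeff (2*n-1)).2.2.2.2]
    rw [Finset.sum_congr rfl (fun i hi => by
      rw [(Stmt16Aux.onesub_pow_coeff (n+2*t-2*i)).2.2.2.2, harg i hi])]
    rw [Stmt16Aux.Sg4 t ((n:ℂ)+2*(t:ℂ))]
    rw [hc2n1]
    simp only [Polynomial.coeff_sub, Polynomial.coeff_one, Polynomial.coeff_X]
    push_cast
    norm_num
    ring
  -- power sums
  have hp1 : Stmt16Aux.pp 1 ms = (n:ℂ) := by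
    have l1 := Stmt16Aux.L1 ms
    rw [hd1] at l1
    linear_combination l1
  have hp2 : Stmt16Aux.pp 2 ms = -3*(n:ℂ) + 2 - 4*(t:ℂ) - 4*(t:ℂ)^2 := by
    have l2 := Stmt16Aux.L2 ms
    rw [hd1, hd2, hp1] at l2
    linear_combination l2
  have hp3 : Stmt16Aux.pp 3 ms = -5*(n:ℂ) + 3 - 6*(t:ℂ) - 6*(t:ℂ)^2 := by
    have l3 := Stmt16Aux.L3 ms
    rw [hd1, hd2, hd3, hp1, hp2] at l3
    linear_combination l3
  have hp4 : Stmt16Aux.pp 4 ms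
      = -(4/3)*(n:ℂ)^3 + 10*(n:ℂ)^2 - (47/3)*(n:ℂ) + 6 - (38/3)*(t:ℂ)
        - (22/3)*(t:ℂ)^2 + (32/3)*(t:ℂ)^3 + (16/3)*(t:ℂ)^4
        + 16*(n:ℂ)*(t:ℂ) + 16*(n:ℂ)*(t:ℂ)^2 := by
    have l4 := Stmt16Aux.L4 ms
    rw [hd1, hd2, hd3, hd4, hp1, hp2, hp3] at l4
    linear_combination l4
  -- the key sum and its value
  have hsum4 := Stmt16Aux.sum4 ms
  rw [hp1, hp2, hp3, hp4, hcardms] at hsum4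
  have hTval : (ms.map (fun b => (b - 2⁻¹)^4)).sum
      = (((3 - (20/3)*(t:ℝ) - (4/3)*(t:ℝ)^2 + (32/3)*(t:ℝ)^3 + (16/3)*(t:ℝ)^4
          - (253/24)*(n:ℝ) + 16*(n:ℝ)*(t:ℝ) + 16*(n:ℝ)*(t:ℝ)^2 + 10*(n:ℝ)^2
          - (4/3)*(n:ℝ)^3 : ℝ)) : ℂ) := by
    rw [hsum4]
    push_cast
    ring
  -- nonnegativity of the sum
  have hterm : ∀ w ∈ ms.map (fun b => (b - 2⁻¹)^4), ∃ y : ℝ, w = ((y^4 : ℝ) : ℂ) := by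
    intro w hw
    obtain ⟨b, hb, rfl⟩ := Multiset.mem_map.mp hw
    rw [hmsdef] at hb
    obtain ⟨z, hz, rfl⟩ := Multiset.mem_map.mp hb
    have habs : ‖z‖ = 1 := hall z hz
    have hnsq : Complex.normSq z = 1 := by
      have := Complex.sq_norm z
      rw [habs] at this
      simpa using this.symm
    have hzsq : z.re^2 + z.im^2 = 1 := by
      rw [Complex.normSq_apply] at hnsq
      nlinarith [hnsq]
    have hzre : z.re ≠ 1 := by
      intro h1
      apply hroot_ne_one z hz
      have him : z.im = 0 := by nlinarith [hzsq, h1]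
      apply Complex.ext
      · simpa using h1
      · simpa using him
    have hre1z : (1:ℝ) - z.re ≠ 0 := by
      intro h
      exact hzre (by linarith [sub_eq_zero.mp h])
    have hnsq1z : Complex.normSq (1 - z) = 2*(1 - z.re) := by
      rw [Complex.normSq_apply]
      simp only [Complex.sub_re, Complex.sub_im, Complex.one_re, Complex.one_im]
      nlinarith [hzsq]
    have hbre : ((1 - z)⁻¹).re = 1/2 := by
      rw [Complex.inv_re, hnsq1z]
      simp only [Complex.sub_re, Complex.one_re]
      field_simp
    set v : ℂ := (1 - z)⁻¹ - 2⁻¹ with hv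
    have hvre : v.re = 0 := by
      rw [hv, Complex.sub_re, hbre]
      norm_num [Complex.inv_re, Complex.normSq_apply]
    obtain ⟨y, hy⟩ : ∃ y : ℝ, v.im = y := ⟨v.im, rfl⟩
    refine ⟨y, ?_⟩
    have hveq : v = (y : ℝ) * Complex.I := by
      apply Complex.ext
      · simp [hvre]
      · simp [hy]
    rw [hveq]
    have hI4 : (Complex.I)^4 = 1 := by
      rw [show (4:ℕ) = 2*2 from rfl, pow_mul, Complex.I_sq]
      norm_num
    rw [mul_pow, hI4, mul_one]
    push_cast
    ring
  have hre : (0:ℝ) ≤ ((ms.map (fun b => (b - 2⁻¹)^4)).sum).re := by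
    have hmap : ((ms.map (fun b => (b - 2⁻¹)^4)).sum).re
        = ((ms.map (fun b => (b - 2⁻¹)^4)).map Complex.re).sum := by
      simpa using map_multiset_sum Complex.reAddGroupHom (ms.map (fun b => (b - 2⁻¹)^4))
    rw [hmap]
    apply Multiset.sum_nonneg
    intro x hx
    obtain ⟨w, hw, rfl⟩ := Multiset.mem_map.mp hx
    obtain ⟨y, rfl⟩ := hterm w hw
    rw [Complex.ofReal_re]
    positivity
  -- final inequality
  rw [hTval, Complex.ofReal_re] at hre
  have hx80 : (80:ℝ) ≤ (n:ℝ) := by exact_mod_cast hn80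
  have hxt : 8*((t:ℝ)+1)^3 ≤ (n:ℝ) := by exact_mod_cast hn1
  have ht0 : (0:ℝ) ≤ (t:ℝ) := Nat.cast_nonneg t
  have hx0 : (0:ℝ) < (n:ℝ) := by linarith
  have a1 : 80*(n:ℝ)^2 ≤ (n:ℝ)^3 := by nlinarith [hx80, hx0]
  have a2 : 64*((t:ℝ)+1)^6 ≤ (n:ℝ)^2 := by nlinarith [hxt, ht0]
  have a3 : 64*(n:ℝ)*((t:ℝ)+1)^6 ≤ (n:ℝ)^3 := by nlinarith [a2, hx0]
  have a4 : 512*((t:ℝ)+1)^9 ≤ (n:ℝ)^3 := by nlinarith [hxt, ht0]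
  have a5 : ((t:ℝ)+1)^2 ≤ ((t:ℝ)+1)^6 := by nlinarith [ht0]
  have a6 : ((t:ℝ)+1)^4 ≤ ((t:ℝ)+1)^9 := by nlinarith [ht0]
  have a7 : 384*(n:ℝ)*((t:ℝ)+((t:ℝ))^2) ≤ 6*(n:ℝ)^3 := by nlinarith [a3, a5, hx0, ht0]
  have a8 : 72 - 160*(t:ℝ) - 32*(t:ℝ)^2 + 256*(t:ℝ)^3 + 128*(t:ℝ)^4 ≤ (n:ℝ)^3 := by
    nlinarith [a4, a6, ht0]
  nlinarith [hre, a1, a7, a8, hx0]
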